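/- Let ψ > 0, ζ > 0, H > 0, D > 0, K₀ > 0, α > 0, η₂ > η₁ > 0, p > 0, B > 0, N₀ > 0. For q ∈ (0,1) define θ_s(q) = ψ − (1/ζ)·(ln(1/q − 1) − ln ψ), x(q) = D − H/tan(θ_s(q)·π/180), d(q) = √(x(q)² + H²), θ_c(q) = (180/π)·arctan(H/x(q)), q_c(q) = 1/(1 + ψ·exp(−ζ·(θ_c(q) − ψ))), h(q) = (K₀·d(q))^{−α} / (η₁·q_c(q) + η₂·(1 − q_c(q))), and r(q) = B·log(1 + p·h(q)/(B·N₀)). Then on any interval I ⊆ (0,1) such that 0 < θ_s(q) < 90 and x(q) > 0 for all q ∈ I, the function r is strictly decreasing. -/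
import Mathlib
set_option maxHeartbeats 2000000


/-- Lemma 2 of the paper: the uplink transmission rate `r(q)`, evaluated at the
Proposition-1-optimal UAV position corresponding to a uniform successful sensing
probability `q`, is strictly decreasing in `q` on any interval `I ⊆ (0,1)` on which the
sensing elevation angle lies in `(0°, 90°)` and the horizontal offset `x(q)` is positive. -/
theorem rate_strictly_decreasing (ψ ζ H D K₀ α η₁ η₂ p B N₀ : ℝ)
    (hψ : 0 < ψ) (hζ : 0 < ζ) (hH : 0 < H) (hD : 0 < D) (hK₀ : 0 < K₀) (hα : 0 < α)
    (hη₁ : 0 < η₁) (hη : η₁ < η₂) (hp : 0 < p) (hB : 0 < B) (hN₀ : 0 < N₀)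
    (θs x d θc qc h r : ℝ → ℝ)
    (hθs : ∀ q, θs q = ψ - (1 / ζ) * (Real.log (1 / q - 1) - Real.log ψ))
    (hx : ∀ q, x q = D - H / Real.tan (θs q * Real.pi / 180))
    (hd : ∀ q, d q = Real.sqrt ((x q) ^ 2 + H ^ 2))
    (hθc : ∀ q, θc q = (180 / Real.pi) * Real.arctan (H / x q))
    (hqc : ∀ q, qc q = 1 / (1 + ψ * Real.exp (-ζ * (θc q - ψ))))
    (hh : ∀ q, h q = (K₀ * d q) ^ (-α) / (η₁ * qc q + η₂ * (1 - qc q)))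
    (hr : ∀ q, r q = B * Real.log (1 + p * h q / (B * N₀)))
    (I : Set ℝ) (hI : I ⊆ Set.Ioo 0 1) (hIconn : I.OrdConnected)
    (hIθ : ∀ q ∈ I, 0 < θs q ∧ θs q < 90) (hIx : ∀ q ∈ I, 0 < x q) :
    StrictAntiOn r I := by
  intro a ha b hb hab
  obtain ⟨ha0, ha1⟩ := hI ha
  obtain ⟨hb0, hb1⟩ := hI hb
  obtain ⟨hθa0, hθa9⟩ := hIθ a ha
  obtain ⟨hθb0, hθb9⟩ := hIθ b hb
  have hxa := hIx a ha
  have hxb := hIx b hb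
  have hπ := Real.pi_pos
  -- θs a < θs b
  have hinvb : 0 < 1 / b - 1 := by
    have : 1 < 1 / b := one_lt_one_div hb0 hb1
    linarith
  have hinv : 1 / b - 1 < 1 / a - 1 := by
    have : 1 / b < 1 / a := one_div_lt_one_div_of_lt ha0 hab
    linarith
  have hlog : Real.log (1 / b - 1) < Real.log (1 / a - 1) := Real.log_lt_log hinvb hinv
  have hθab : θs a < θs b := by
    rw [hθs a, hθs b]
    have hζ' : 0 < 1 / ζ := by positivity
    nlinarith
  -- radian angles
  have hTa0 : 0 < θs a * Real.pi / 180 := by positivity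
  have hTb0 : 0 < θs b * Real.pi / 180 := by positivity
  have hTa2 : θs a * Real.pi / 180 < Real.pi / 2 := by nlinarith
  have hTb2 : θs b * Real.pi / 180 < Real.pi / 2 := by nlinarith
  have hTab : θs a * Real.pi / 180 < θs b * Real.pi / 180 := by nlinarith
  have htanpos : 0 < Real.tan (θs a * Real.pi / 180) :=
    Real.tan_pos_of_pos_of_lt_pi_div_two hTa0 hTa2
  have htan : Real.tan (θs a * Real.pi / 180) < Real.tan (θs b * Real.pi / 180) :=
    Real.strictMonoOn_tan ⟨by linarith, hTa2⟩ ⟨by linarith, hTb2⟩ hTab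
  -- x a < x b
  have hxab : x a < x b := by
    rw [hx a, hx b]
    have : H / Real.tan (θs b * Real.pi / 180) < H / Real.tan (θs a * Real.pi / 180) :=
      div_lt_div_of_pos_left hH htanpos htan
    linarith
  -- d a < d b, d a > 0
  have hda0 : 0 < d a := by rw [hd a]; positivity
  have hdb0 : 0 < d b := by rw [hd b]; positivity
  have hdab : d a < d b := by
    rw [hd a, hd b]
    apply Real.sqrt_lt_sqrt (by positivity)
    have := pow_lt_pow_left₀ hxab hxa.le two_ne_zero
    linarith
  -- numerator comparison
  have hnum : (K₀ * d b) ^ (-α) < (K₀ * d a) ^ (-α) := by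
    apply Real.rpow_lt_rpow_of_neg (by positivity) (by nlinarith) (by linarith)
  have hnuma0 : 0 < (K₀ * d a) ^ (-α) := Real.rpow_pos_of_pos (by positivity) _
  have hnumb0 : 0 < (K₀ * d b) ^ (-α) := Real.rpow_pos_of_pos (by positivity) _
  -- θc b < θc a
  have hθcab : θc b < θc a := by
    rw [hθc a, hθc b]
    have h1 : H / x b < H / x a := div_lt_div_of_pos_left hH hxa hxab
    have h2 : Real.arctan (H / x b) < Real.arctan (H / x a) := Real.arctan_strictMono h1
    have : 0 < 180 / Real.pi := by positivity
    nlinarith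
  -- qc b < qc a
  have hqcden (q : ℝ) : 0 < 1 + ψ * Real.exp (-ζ * (θc q - ψ)) := by positivity
  have hqcab : qc b < qc a := by
    rw [hqc a, hqc b]
    apply one_div_lt_one_div_of_lt (hqcden a)
    have : Real.exp (-ζ * (θc a - ψ)) < Real.exp (-ζ * (θc b - ψ)) := by
      apply Real.exp_lt_exp.mpr; nlinarith
    nlinarith
  have hqc01 (q : ℝ) : 0 < qc q ∧ qc q < 1 := by
    rw [hqc q]
    constructor
    · positivity
    · rw [div_lt_one (hqcden q)]
      nlinarith [Real.exp_pos (-ζ * (θc q - ψ))]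
  obtain ⟨hqca0, hqca1⟩ := hqc01 a
  obtain ⟨hqcb0, hqcb1⟩ := hqc01 b
  -- denominators
  have hdena0 : 0 < η₁ * qc a + η₂ * (1 - qc a) := by nlinarith
  have hdenb0 : 0 < η₁ * qc b + η₂ * (1 - qc b) := by nlinarith
  have hdenab : η₁ * qc a + η₂ * (1 - qc a) < η₁ * qc b + η₂ * (1 - qc b) := by nlinarith
  -- h b < h a
  have hh0 (q : ℝ) (h1 : 0 < (K₀ * d q) ^ (-α)) (h2 : 0 < η₁ * qc q + η₂ * (1 - qc q)) :
      0 < h q := by rw [hh q]; positivity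
  have hhab : h b < h a := by
    rw [hh a, hh b, div_lt_div_iff₀ hdenb0 hdena0]
    have h1 := mul_lt_mul_of_pos_right hnum hdena0
    have h2 := mul_lt_mul_of_pos_left hdenab hnuma0
    linarith
  have hhb0 : 0 < h b := hh0 b hnumb0 hdenb0
  -- r b < r a
  rw [hr a, hr b]
  have harg : 1 + p * h b / (B * N₀) < 1 + p * h a / (B * N₀) := by
    have hBN : 0 < B * N₀ := by positivity
    gcongr
  have hlog2 : Real.log (1 + p * h b / (B * N₀)) < Real.log (1 + p * h a / (B * N₀)) := by
    apply Real.log_lt_log (by positivity) harg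
  exact mul_lt_mul_of_pos_left hlog2 hB
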